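/- Let φ_n be the linear map on symmetric functions defined by φ_n(f) = ∑_{ν ⊢ n} f(Ξ_ν) p_ν / z_ν, where f(Ξ_ν) is the evaluation of f at the multiset of eigenvalues of a permutation matrix of cycle type ν. Then for all symmetric functions f and g, φ_n(fg) = φ_n(f) ∗ φ_n(g), where ∗ denotes the Kronecker (internal) product on symmetric functions. -/

import Mathlib

open scoped BigOperators
noncomputable section

/-- The ring of symmetric functions, presented as `ℚ[p₁, p₂, p₃, …]`,
with the variable `X k` representing the power sum `p_k` (the variable `X 0` is unused). -/
abbrev SymFn := MvPolynomial ℕ ℚ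

/-- The power sum symmetric function `p_k`. -/
def pGen (k : ℕ) : SymFn := MvPolynomial.X k

/-- `p_λ` for a multiset of parts. -/
def pMul (m : Multiset ℕ) : SymFn := (m.map pGen).prod

/-- `p_λ` for a partition `λ`. -/
def pPart {n : ℕ} (lam : n.Partition) : SymFn := pMul lam.parts

/-- `z_λ = ∏_i i^{m_i(λ)} m_i(λ)!`. -/
def zed {n : ℕ} (lam : n.Partition) : ℚ :=
  ∏ i ∈ Finset.range (n + 1),
    (i : ℚ) ^ (lam.parts.count i) * (Nat.factorial (lam.parts.count i))

/-- `z` of a monomial in the `p`-generators. -/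
def zMon (m : ℕ →₀ ℕ) : ℚ :=
  ∏ i ∈ m.support, (i : ℚ) ^ (m i) * (Nat.factorial (m i))

/-- The Hall scalar product, determined by `⟨p_λ, p_μ⟩ = z_λ δ_{λμ}`. -/
def hall (f g : SymFn) : ℚ :=
  ∑ m ∈ f.support, MvPolynomial.coeff m f * MvPolynomial.coeff m g * zMon m

/-- The complete homogeneous symmetric function `h_m = ∑_{λ ⊢ m} p_λ / z_λ`. -/
def hFn (m : ℕ) : SymFn := ∑ lam : m.Partition, (zed lam)⁻¹ • pPart lam

/-- `h_k` for an integer index, vanishing for negative `k`. -/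
def hInt (k : ℤ) : SymFn := if 0 ≤ k then hFn k.toNat else 0

/-- The Schur function of a (finite, weakly decreasing) list of row lengths,
via the Jacobi–Trudi determinant `s_λ = det(h_{λ_i - i + j})`. -/
def schurList (l : List ℕ) : SymFn :=
  Matrix.det (Matrix.of fun i j : Fin l.length =>
    hInt ((l.get i : ℤ) - (i : ℤ) + (j : ℤ)))

/-- The parts of a partition, sorted in weakly decreasing order. -/
def partList {n : ℕ} (lam : n.Partition) : List ℕ := (lam.parts.sort (· ≤ ·)).reverse

/-- The Schur function `s_λ`. -/
def schur {n : ℕ} (lam : n.Partition) : SymFn := schurList (partList lam)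

/-- Evaluation `f(Ξ_ν)` of a symmetric function at the eigenvalues of a permutation
matrix of cycle type `ν`: the power sum `p_k` evaluates to `∑_{j ∈ ν, j ∣ k} j`. -/
def xiEval {n : ℕ} (nu : n.Partition) (f : SymFn) : ℚ :=
  MvPolynomial.eval (fun k => ((nu.parts.filter (fun j => j ∣ k)).sum : ℚ)) f

/-- The character scalar product `⟨f, g⟩_@ = ∑_{ν ⊢ n} f(Ξ_ν) g(Ξ_ν) / z_ν`. -/
def atProd (n : ℕ) (f g : SymFn) : ℚ :=
  ∑ nu : n.Partition, xiEval nu f * xiEval nu g / zed nu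

/-- The Frobenius-type map `φ_n(f) = ∑_{ν ⊢ n} f(Ξ_ν) p_ν / z_ν`. -/
def phi (n : ℕ) (f : SymFn) : SymFn :=
  ∑ nu : n.Partition, (xiEval nu f / zed nu) • pPart nu

/-- The Kronecker (internal) product, determined by
`(p_λ/z_λ) ∗ (p_μ/z_μ) = δ_{λμ} p_λ/z_λ`. -/
def kron (f g : SymFn) : SymFn :=
  ∑ m ∈ f.support,
    MvPolynomial.monomial m (MvPolynomial.coeff m f * MvPolynomial.coeff m g * zMon m)

noncomputable section
open MvPolynomial

def emb {n : ℕ} (nu : n.Partition) : ℕ →₀ ℕ := Multiset.toFinsupp nu.parts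
lemma emb_inj {n : ℕ} : Function.Injective (emb (n := n)) := by
  intro a b h
  ext1
  exact Multiset.toFinsupp.injective h
lemma pMul_eq (m : Multiset ℕ) : pMul m = monomial (Multiset.toFinsupp m) 1 := by
  induction m using Multiset.induction with
  | empty => simp [pMul]
  | cons a s ih =>
      rw [pMul] at ih ⊢
      simp only [Multiset.map_cons, Multiset.prod_cons, ih]
      rw [pGen, X, monomial_mul, one_mul]
      have h : Finsupp.single a 1 + Multiset.toFinsupp s = Multiset.toFinsupp (a ::ₘ s) := by
        ext i
        simp [Multiset.count_cons, Finsupp.single_apply, eq_comm]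
        omega
      rw [h]
lemma emb_apply {n : ℕ} (nu : n.Partition) (i : ℕ) : emb nu i = nu.parts.count i := rfl
lemma count_zero_parts {n : ℕ} (nu : n.Partition) : nu.parts.count 0 = 0 := by
  rw [Multiset.count_eq_zero]
  intro h
  exact absurd (nu.parts_pos h) (lt_irrefl 0)
lemma emb_support_subset {n : ℕ} (nu : n.Partition) :
    (emb nu).support ⊆ Finset.range (n + 1) := by
  intro i hi
  rw [Finsupp.mem_support_iff, emb_apply] at hi
  have hmem : i ∈ nu.parts := by rwa [← Multiset.count_pos, Nat.pos_iff_ne_zero]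
  have : i ≤ nu.parts.sum := Multiset.le_sum_of_mem hmem
  rw [nu.parts_sum] at this
  simpa [Finset.mem_range] using Nat.lt_succ_of_le this
lemma zMon_emb {n : ℕ} (nu : n.Partition) : zMon (emb nu) = zed nu := by
  rw [zMon, zed]
  refine Finset.prod_subset (emb_support_subset nu) ?_
  intro i _ hi
  rw [Finsupp.notMem_support_iff] at hi
  simp [hi]
lemma zed_pos {n : ℕ} (nu : n.Partition) : 0 < zed nu := by
  apply Finset.prod_pos
  intro i _
  rcases Nat.eq_zero_or_pos i with h | h
  · subst h
    simp [count_zero_parts]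
  · positivity
lemma phi_eq (n : ℕ) (f : SymFn) :
    phi n f = ∑ nu : n.Partition, monomial (emb nu) (xiEval nu f / zed nu) := by
  rw [phi]
  refine Finset.sum_congr rfl fun nu _ => ?_
  rw [pPart, pMul_eq, smul_monomial, smul_eq_mul, mul_one]
  rfl
lemma coeff_phi_emb (n : ℕ) (f : SymFn) (mu : n.Partition) :
    coeff (emb mu) (phi n f) = xiEval mu f / zed mu := by
  rw [phi_eq, coeff_sum]
  rw [Finset.sum_eq_single mu]
  · rw [coeff_monomial, if_pos rfl]
  · intro nu _ hne
    rw [coeff_monomial, if_neg fun h => hne (emb_inj h)]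
  · intro h
    exact absurd (Finset.mem_univ mu) h
lemma coeff_phi_notmem (n : ℕ) (f : SymFn) (m : ℕ →₀ ℕ)
    (hm : m ∉ Finset.univ.image (emb (n := n))) : coeff m (phi n f) = 0 := by
  rw [phi_eq, coeff_sum]
  refine Finset.sum_eq_zero fun nu _ => ?_
  rw [coeff_monomial, if_neg]
  intro h
  exact hm (Finset.mem_image.mpr ⟨nu, Finset.mem_univ nu, h⟩)
lemma support_phi (n : ℕ) (f : SymFn) :
    (phi n f).support ⊆ Finset.univ.image (emb (n := n)) := by
  intro m hm
  by_contra h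
  exact (MvPolynomial.mem_support_iff.mp hm) (coeff_phi_notmem n f m h)

end
end


/-- the map `φ_n(f) = ∑_{ν ⊢ n} f(Ξ_ν) p_ν / z_ν` turns products into
Kronecker products: `φ_n(fg) = φ_n(f) ∗ φ_n(g)`. -/
theorem phi_mul_eq_kron (n : ℕ) (f g : SymFn) :
    phi n (f * g) = kron (phi n f) (phi n g) := by
  rw [kron, Finset.sum_subset (support_phi n f) (fun m _ hm => by
    rw [MvPolynomial.notMem_support_iff.mp hm, zero_mul, zero_mul, MvPolynomial.monomial_zero]),
    Finset.sum_image (fun a _ b _ h => emb_inj h), phi_eq]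
  refine Finset.sum_congr rfl fun nu _ => ?_
  rw [coeff_phi_emb, coeff_phi_emb, zMon_emb]
  congr 1
  have hz : zed nu ≠ 0 := (zed_pos nu).ne'
  have hmul : xiEval nu (f * g) = xiEval nu f * xiEval nu g := by
    simp [xiEval]
  rw [hmul]
  field_simp
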